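/- For all x ∈ [0,1], √(2π)·exp(x + x²/2) − (1+exp(x))² < 0, and consequently the logistic function satisfies exp(x)/(1+exp(x)) ≤ Φ(x) on [0,1], where Φ is the standard Gaussian CDF. -/

import Mathlib

open MeasureTheory

noncomputable def stdGaussianCDF (x : ℝ) : ℝ :=
  (Real.sqrt (2 * Real.pi))⁻¹ * ∫ t in Set.Iic x, Real.exp (-t ^ 2 / 2)

lemma aux_sqrt_lt : Real.sqrt (2 * Real.pi) < 2.51 := by
  rw [show (2.51 : ℝ) = Real.sqrt (2.51 ^ 2) from (Real.sqrt_sq (by norm_num)).symm]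
  apply Real.sqrt_lt_sqrt (by positivity)
  nlinarith [Real.pi_lt_d2]

lemma aux_exp_upper {x : ℝ} (h0 : 0 ≤ x) (h1 : x ≤ 1) :
    Real.exp x ≤ 1 + x + x ^ 2 / 2 + x ^ 3 / 6 + 5 * x ^ 4 / 96 := by
  have h := Real.exp_bound' h0 h1 (n := 4) (by norm_num)
  simp [Finset.sum_range_succ, Nat.factorial] at h
  nlinarith [h]

-- tanh(x/2) ≤ x/2, i.e. 2(e^x - 1) ≤ x(1 + e^x)
lemma aux_tanh {x : ℝ} (h0 : 0 ≤ x) (h1 : x ≤ 1) :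
    2 * (Real.exp x - 1) ≤ x * (1 + Real.exp x) := by
  have hU := aux_exp_upper h0 h1
  have key : (2 - x) * Real.exp x ≤ (2 - x) * (1 + x + x ^ 2 / 2 + x ^ 3 / 6 + 5 * x ^ 4 / 96) :=
    mul_le_mul_of_nonneg_left hU (by linarith)
  nlinarith [key, pow_nonneg h0 3, pow_nonneg h0 4, pow_nonneg h0 5]

lemma aux_part1 {x : ℝ} (h0 : 0 ≤ x) (h1 : x ≤ 1) :
    Real.sqrt (2 * Real.pi) * Real.exp (x + x ^ 2 / 2) - (1 + Real.exp x) ^ 2 < 0 := by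
  set s := Real.sqrt (2 * Real.pi) with hs
  have hs0 : 0 ≤ s := Real.sqrt_nonneg _
  have hs1 : s < 2.51 := aux_sqrt_lt
  set A := Real.exp (x / 2) with hAdef
  have hA2 : A ^ 2 = Real.exp x := by
    rw [hAdef, sq, ← Real.exp_add]; congr 1; ring
  have hA : 1 + x / 2 + (x / 2) ^ 2 / 2 ≤ A :=
    Real.quadratic_le_exp_of_nonneg (by positivity)
  have hEx : x * A ≤ Real.exp x - 1 := by nlinarith [hA, hA2]
  have hxA : 0 ≤ x * A := by positivity
  have hsq : (4 + x ^ 2) * Real.exp x ≤ (1 + Real.exp x) ^ 2 := by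
    nlinarith [hEx, hxA, hA2]
  -- exp(x + x^2/2) = exp x * exp (x^2/2)
  have hsplit : Real.exp (x + x ^ 2 / 2) = Real.exp x * Real.exp (x ^ 2 / 2) := by
    rw [← Real.exp_add]
  set u := x ^ 2 / 2 with hu
  have hu0 : 0 ≤ u := by positivity
  have hu1 : u ≤ 1 / 2 := by nlinarith
  have hUu : Real.exp u ≤ 1 + u + u ^ 2 := by
    have h' := aux_exp_upper hu0 (by linarith)
    nlinarith [h', mul_nonneg (by linarith : (0:ℝ) ≤ 1/2 - u) (sq_nonneg u),
      mul_nonneg (mul_nonneg (by linarith : (0:ℝ) ≤ 1/2 - u) (by linarith : (0:ℝ) ≤ 1/2 + u)) (sq_nonneg u)]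
  have hkey : s * Real.exp u < 4 + x ^ 2 := by
    have hx2 : x ^ 2 = 2 * u := by rw [hu]; ring
    rw [hx2]
    calc s * Real.exp u ≤ s * (1 + u + u ^ 2) := by
          apply mul_le_mul_of_nonneg_left hUu hs0
      _ < 4 + 2 * u := by nlinarith
  have hE0 : 0 < Real.exp x := Real.exp_pos x
  calc s * Real.exp (x + x ^ 2 / 2) - (1 + Real.exp x) ^ 2
      = s * Real.exp u * Real.exp x - (1 + Real.exp x) ^ 2 := by rw [hsplit]; ring
    _ < (4 + x ^ 2) * Real.exp x - (1 + Real.exp x) ^ 2 := by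
        have := mul_lt_mul_of_pos_right hkey hE0
        linarith
    _ ≤ 0 := by linarith [hsq]

lemma gauss_Iic_zero :
    ∫ t in Set.Iic (0 : ℝ), Real.exp (-t ^ 2 / 2) = Real.sqrt (2 * Real.pi) / 2 := by
  have hform : ∀ t : ℝ, Real.exp (-t ^ 2 / 2) = Real.exp (-(1/2) * t ^ 2) := by
    intro t; congr 1; ring
  simp_rw [hform]
  have h := integral_comp_neg_Iic (0 : ℝ)
    (fun t => Real.exp (-(1/2) * t ^ 2))
  simp only [neg_neg, neg_zero, even_two, Even.neg_pow] at h
  rw [h, integral_gaussian_Ioi]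
  rw [show Real.pi / (1/2) = 2 * Real.pi by ring]

theorem logistic_le_gaussianCDF_on_unit_interval :
    (∀ x ∈ Set.Icc (0 : ℝ) 1,
        Real.sqrt (2 * Real.pi) * Real.exp (x + x ^ 2 / 2) - (1 + Real.exp x) ^ 2 < 0) ∧
    (∀ x ∈ Set.Icc (0 : ℝ) 1,
        Real.exp x / (1 + Real.exp x) ≤ stdGaussianCDF x) := by
  constructor
  · rintro x ⟨h0, h1⟩
    exact aux_part1 h0 h1
  · rintro x ⟨h0, h1⟩
    set s := Real.sqrt (2 * Real.pi) with hs
    have hs0 : 0 < s := Real.sqrt_pos.mpr (by positivity)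
    have hs1 : s < 2.51 := aux_sqrt_lt
    have hform : ∀ t : ℝ, Real.exp (-t ^ 2 / 2) = Real.exp (-(1/2) * t ^ 2) := by
      intro t; congr 1; ring
    have hint : Integrable (fun t : ℝ => Real.exp (-t ^ 2 / 2)) := by
      simp_rw [hform]
      exact integrable_exp_neg_mul_sq (by norm_num)
    -- split the integral
    have hsplit : ∫ t in Set.Iic x, Real.exp (-t ^ 2 / 2)
        = (∫ t in Set.Iic (0:ℝ), Real.exp (-t ^ 2 / 2))
          + ∫ t in Set.Ioc (0:ℝ) x, Real.exp (-t ^ 2 / 2) := by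
      rw [← MeasureTheory.setIntegral_union (Set.Iic_disjoint_Ioc le_rfl)
        measurableSet_Ioc hint.integrableOn hint.integrableOn,
        Set.Iic_union_Ioc_eq_Iic h0]
    -- lower bound on the middle part
    have hmono : x - x ^ 3 / 6 ≤ ∫ t in Set.Ioc (0:ℝ) x, Real.exp (-t ^ 2 / 2) := by
      have hle : ∫ t in Set.Ioc (0:ℝ) x, (1 - t ^ 2 / 2)
          ≤ ∫ t in Set.Ioc (0:ℝ) x, Real.exp (-t ^ 2 / 2) := by
        apply MeasureTheory.setIntegral_mono_on
        · exact (intervalIntegrable_iff_integrableOn_Ioc_of_le h0).mp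
            (by apply Continuous.intervalIntegrable; continuity)
        · exact hint.integrableOn
        · exact measurableSet_Ioc
        · intro t _
          have := Real.add_one_le_exp (-t ^ 2 / 2)
          linarith
      have hval : ∫ t in Set.Ioc (0:ℝ) x, (1 - t ^ 2 / 2) = x - x ^ 3 / 6 := by
        rw [← intervalIntegral.integral_of_le h0]
        have h1' : IntervalIntegrable (fun _ : ℝ => (1:ℝ)) volume 0 x :=
          intervalIntegrable_const
        have h2' : IntervalIntegrable (fun t : ℝ => t ^ 2 / 2) volume 0 x :=
          (intervalIntegral.intervalIntegrable_pow 2).div_const 2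
        rw [intervalIntegral.integral_sub h1' h2', intervalIntegral.integral_div,
          integral_pow]
        simp; ring
      linarith
    have hIic : stdGaussianCDF x ≥ s⁻¹ * (s / 2 + (x - x ^ 3 / 6)) := by
      unfold stdGaussianCDF
      rw [← hs, hsplit, gauss_Iic_zero, ← hs]
      apply mul_le_mul_of_nonneg_left _ (by positivity)
      linarith
    have hhalf : s⁻¹ * (s / 2 + (x - x ^ 3 / 6)) = 1/2 + (x - x ^ 3 / 6) / s := by
      field_simp
    -- logistic bound
    have hE0 : (0:ℝ) < 1 + Real.exp x := by positivity
    have hlog : Real.exp x / (1 + Real.exp x) ≤ 1/2 + x/4 := by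
      rw [div_le_iff₀ hE0]
      have := aux_tanh h0 h1
      nlinarith [this]
    have hcmp : 1/2 + x/4 ≤ 1/2 + (x - x ^ 3 / 6) / s := by
      have : x / 4 ≤ (x - x ^ 3 / 6) / s := by
        rw [div_le_div_iff₀ (by norm_num) hs0]
        nlinarith [mul_le_mul_of_nonneg_left hs1.le h0,
          mul_nonneg (mul_nonneg h0 h0) (by linarith : (0:ℝ) ≤ 1 - x),
          mul_nonneg h0 (by linarith : (0:ℝ) ≤ 1 - x)]
      linarith
    calc Real.exp x / (1 + Real.exp x) ≤ 1/2 + x/4 := hlog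
      _ ≤ 1/2 + (x - x ^ 3 / 6) / s := hcmp
      _ = s⁻¹ * (s / 2 + (x - x ^ 3 / 6)) := hhalf.symm
      _ ≤ stdGaussianCDF x := hIic
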